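/- The function g(y) = (ln cosh y)/y − tanh y on (0,∞) satisfies: g(y) < 0 for all y > 0, g is strictly decreasing on (0,c) and strictly increasing on (c,∞) where c ≈ 1.28377 is the unique positive critical point of g, and g(y) → 0 as y → 0⁺ and as y → ∞. -/

import Mathlib

open Filter

open Real Set

lemma exp64_bounds : 1.89648087 < Real.exp 0.64 ∧ Real.exp 0.64 < 1.89648088 := by
  have h := Real.exp_bound (x := 0.64) (by rw [abs_of_nonneg] <;> norm_num) (n := 11) (by norm_num)
  rw [abs_le] at h
  obtain ⟨h1, h2⟩ := h
  simp only [Finset.sum_range_succ, Finset.sum_range_zero] at h1 h2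
  rw [abs_of_nonneg (by norm_num : (0:ℝ) ≤ 0.64)] at h1 h2
  norm_num [Nat.factorial] at h1 h2
  constructor <;> linarith

lemma exp128_bounds : 3.5966396 < Real.exp 1.28 ∧ Real.exp 1.28 < 3.5966398 := by
  obtain ⟨h1, h2⟩ := exp64_bounds
  have he : Real.exp 1.28 = Real.exp 0.64 * Real.exp 0.64 := by
    rw [← Real.exp_add]; norm_num
  constructor <;> rw [he] <;> nlinarith [h1, h2, Real.exp_pos (0.64:ℝ), Real.exp_pos (0.645:ℝ)]

lemma exp645_bounds : 1.90598702 < Real.exp 0.645 ∧ Real.exp 0.645 < 1.90598703 := by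
  have h := Real.exp_bound (x := 0.645) (by rw [abs_of_nonneg] <;> norm_num) (n := 11) (by norm_num)
  rw [abs_le] at h
  obtain ⟨h1, h2⟩ := h
  simp only [Finset.sum_range_succ, Finset.sum_range_zero] at h1 h2
  rw [abs_of_nonneg (by norm_num : (0:ℝ) ≤ 0.645)] at h1 h2
  norm_num [Nat.factorial] at h1 h2
  constructor <;> linarith

lemma exp129_bounds : 3.6327865 < Real.exp 1.29 ∧ Real.exp 1.29 < 3.6327866 := by
  obtain ⟨h1, h2⟩ := exp645_bounds
  have he : Real.exp 1.29 = Real.exp 0.645 * Real.exp 0.645 := by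
    rw [← Real.exp_add]; norm_num
  constructor <;> rw [he] <;> nlinarith [h1, h2, Real.exp_pos (0.64:ℝ), Real.exp_pos (0.645:ℝ)]

-- upper bound on exp 0.659776
lemma exp_q1_ub : Real.exp 0.6598 < 1.9345 := by
  have h := Real.exp_bound' (x := 0.6598) (by norm_num) (by norm_num) (n := 11) (by norm_num)
  simp only [Finset.sum_range_succ, Finset.sum_range_zero] at h
  norm_num [Nat.factorial] at h
  linarith

-- lower bound on exp 0.6724427
lemma exp_q2_lb : 1.958933 < Real.exp 0.6724 := by
  have h := Real.sum_le_exp_of_nonneg (x := 0.6724) (by norm_num) 11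
  simp only [Finset.sum_range_succ, Finset.sum_range_zero] at h
  norm_num [Nat.factorial] at h
  linarith

noncomputable def HH (y : ℝ) : ℝ :=
  y * Real.tanh y - Real.log (Real.cosh y) - y ^ 2 * (1 / Real.cosh y) ^ 2

lemma cosh128_bounds : 1.9373384 < Real.cosh 1.28 ∧ Real.cosh 1.28 < 1.9373386 ∧
    1.6593011 < Real.sinh 1.28 ∧ Real.sinh 1.28 < 1.6593013 := by
  obtain ⟨h1, h2⟩ := exp128_bounds
  have hi1 : (0.2780372:ℝ) < Real.exp (-1.28) := by
    rw [Real.exp_neg]; rw [lt_inv_comm₀ (by norm_num) (Real.exp_pos _)]; linarith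
  have hi2 : Real.exp (-1.28) < 0.2780374 := by
    rw [Real.exp_neg]; rw [inv_lt_comm₀ (Real.exp_pos _) (by norm_num)]; linarith
  rw [Real.cosh_eq, Real.sinh_eq]
  refine ⟨by linarith, by linarith, by linarith, by linarith⟩

lemma cosh129_bounds : 1.9540286 < Real.cosh 1.29 ∧ Real.cosh 1.29 < 1.9540288 ∧
    1.6787578 < Real.sinh 1.29 ∧ Real.sinh 1.29 < 1.6787580 := by
  obtain ⟨h1, h2⟩ := exp129_bounds
  have hi1 : (0.2752707:ℝ) < Real.exp (-1.29) := by
    rw [Real.exp_neg]; rw [lt_inv_comm₀ (by norm_num) (Real.exp_pos _)]; linarith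
  have hi2 : Real.exp (-1.29) < 0.2752708 := by
    rw [Real.exp_neg]; rw [inv_lt_comm₀ (Real.exp_pos _) (by norm_num)]; linarith
  rw [Real.cosh_eq, Real.sinh_eq]
  refine ⟨by linarith, by linarith, by linarith, by linarith⟩

lemma HH128_neg : HH 1.28 < 0 := by
  obtain ⟨hc1, hc2, hs1, hs2⟩ := cosh128_bounds
  have hch : (0:ℝ) < Real.cosh 1.28 := Real.cosh_pos _
  have e1 : (1.28:ℝ) * Real.tanh 1.28 - 1.28 ^ 2 * (1 / Real.cosh 1.28) ^ 2 =
      (1.28 * Real.sinh 1.28 * Real.cosh 1.28 - 1.6384) / Real.cosh 1.28 ^ 2 := by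
    rw [Real.tanh_eq_sinh_div_cosh]; field_simp; ring
  have key : (1.28:ℝ) * Real.tanh 1.28 - 1.28 ^ 2 * (1 / Real.cosh 1.28) ^ 2 ≤ 0.6598 := by
    rw [e1, div_le_iff₀ (by positivity : (0:ℝ) < Real.cosh 1.28 ^ 2)]
    nlinarith
  have hlog : (0.6598:ℝ) < Real.log (Real.cosh 1.28) := by
    rw [Real.lt_log_iff_exp_lt hch]
    calc Real.exp 0.6598 < 1.9345 := exp_q1_ub
      _ < Real.cosh 1.28 := by linarith
  show (1.28:ℝ) * Real.tanh 1.28 - Real.log (Real.cosh 1.28) - 1.28 ^ 2 * (1 / Real.cosh 1.28) ^ 2 < 0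
  linarith

lemma HH129_pos : 0 < HH 1.29 := by
  obtain ⟨hc1, hc2, hs1, hs2⟩ := cosh129_bounds
  have hch : (0:ℝ) < Real.cosh 1.29 := Real.cosh_pos _
  have e1 : (1.29:ℝ) * Real.tanh 1.29 - 1.29 ^ 2 * (1 / Real.cosh 1.29) ^ 2 =
      (1.29 * Real.sinh 1.29 * Real.cosh 1.29 - 1.6641) / Real.cosh 1.29 ^ 2 := by
    rw [Real.tanh_eq_sinh_div_cosh]; field_simp; ring
  have key : (0.6724:ℝ) ≤ 1.29 * Real.tanh 1.29 - 1.29 ^ 2 * (1 / Real.cosh 1.29) ^ 2 := by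
    rw [e1, le_div_iff₀ (by positivity : (0:ℝ) < Real.cosh 1.29 ^ 2)]
    nlinarith
  have hlog : Real.log (Real.cosh 1.29) < 0.6724 := by
    rw [Real.log_lt_iff_lt_exp hch]
    calc Real.cosh 1.29 < 1.958933 := by linarith
      _ < Real.exp 0.6724 := exp_q2_lb
  show (0:ℝ) < 1.29 * Real.tanh 1.29 - Real.log (Real.cosh 1.29) - 1.29 ^ 2 * (1 / Real.cosh 1.29) ^ 2
  linarith

lemma tanh_hasDerivAt (x : ℝ) : HasDerivAt Real.tanh ((1 / Real.cosh x) ^ 2) x := by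
  have h := (Real.hasDerivAt_sinh x).fun_div (Real.hasDerivAt_cosh x) (Real.cosh_pos x).ne'
  have he : Real.tanh = fun y => Real.sinh y / Real.cosh y :=
    funext fun y => Real.tanh_eq_sinh_div_cosh y
  rw [he]
  refine h.congr_deriv ?_
  have h2 := Real.cosh_sq_sub_sinh_sq x
  field_simp
  nlinarith [Real.cosh_pos x]

lemma logcosh_hasDerivAt (x : ℝ) :
    HasDerivAt (fun y => Real.log (Real.cosh y)) (Real.tanh x) x := by
  have h := (Real.hasDerivAt_cosh x).log (Real.cosh_pos x).ne'
  rw [Real.tanh_eq_sinh_div_cosh]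
  exact h

lemma F_hasDerivAt (x : ℝ) :
    HasDerivAt (fun y => y * Real.tanh y - Real.log (Real.cosh y))
      (x * (1 / Real.cosh x) ^ 2) x := by
  have h := ((hasDerivAt_id x).fun_mul (tanh_hasDerivAt x)).fun_sub (logcosh_hasDerivAt x)
  refine h.congr_deriv ?_
  simp only [id_eq]; ring

lemma sech2_hasDerivAt (x : ℝ) :
    HasDerivAt (fun y => (1 / Real.cosh y) ^ 2)
      (-2 * Real.sinh x / Real.cosh x ^ 3) x := by
  have h1 : HasDerivAt (fun y => 1 / Real.cosh y) (-Real.sinh x / Real.cosh x ^ 2) x := by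
    simpa only [one_div] using (Real.hasDerivAt_cosh x).fun_inv (Real.cosh_pos x).ne'
  have h2 := h1.fun_pow 2
  refine h2.congr_deriv ?_
  have hc := (Real.cosh_pos x).ne'
  norm_num
  field_simp

lemma HH_hasDerivAt (x : ℝ) :
    HasDerivAt HH (x * (1 / Real.cosh x) ^ 2 * (2 * x * Real.tanh x - 1)) x := by
  have h := (F_hasDerivAt x).fun_sub (((hasDerivAt_pow 2 x)).fun_mul (sech2_hasDerivAt x))
  have he : HH = fun y => (y * Real.tanh y - Real.log (Real.cosh y)) - y ^ 2 * (1 / Real.cosh y) ^ 2 := by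
    rfl
  rw [he]
  refine h.congr_deriv ?_
  have hc := (Real.cosh_pos x).ne'
  rw [Real.tanh_eq_sinh_div_cosh]
  field_simp
  ring

lemma phi_hasDerivAt (x : ℝ) :
    HasDerivAt (fun y => 2 * y * Real.tanh y)
      (2 * Real.tanh x + 2 * x * (1 / Real.cosh x) ^ 2) x := by
  have h := (((hasDerivAt_id x).const_mul 2).fun_mul (tanh_hasDerivAt x))
  refine h.congr_deriv ?_
  simp only [id_eq]; ring

lemma tanh_nonneg {x : ℝ} (hx : 0 ≤ x) : 0 ≤ Real.tanh x := by
  rw [Real.tanh_eq_sinh_div_cosh]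
  exact div_nonneg (Real.sinh_nonneg_iff.2 hx) (Real.cosh_pos x).le

lemma tanh_pos {x : ℝ} (hx : 0 < x) : 0 < Real.tanh x := by
  rw [Real.tanh_eq_sinh_div_cosh]
  exact div_pos (Real.sinh_pos_iff.2 hx) (Real.cosh_pos x)

lemma tanh_lt_one (x : ℝ) : Real.tanh x < 1 := by
  rw [Real.tanh_eq_sinh_div_cosh, div_lt_one (Real.cosh_pos x)]
  exact Real.sinh_lt_cosh x

lemma continuous_tanh : Continuous Real.tanh :=
  Differentiable.continuous fun x => (tanh_hasDerivAt x).differentiableAt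

lemma continuous_HH : Continuous HH :=
  Differentiable.continuous fun x => (HH_hasDerivAt x).differentiableAt

lemma phi_mono : StrictMonoOn (fun y : ℝ => 2 * y * Real.tanh y) (Set.Ici 0) := by
  apply strictMonoOn_of_deriv_pos (convex_Ici 0)
  · exact ((continuous_const.mul continuous_id).mul continuous_tanh).continuousOn
  · intro x hx
    rw [interior_Ici] at hx
    rw [(phi_hasDerivAt x).deriv]
    have hx' : (0:ℝ) < x := hx
    have h1 := tanh_pos hx'
    have h2 : (0:ℝ) < (1 / Real.cosh x) ^ 2 := by positivity
    nlinarith [mul_pos hx' h2]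

lemma F_mono : StrictMonoOn (fun y : ℝ => y * Real.tanh y - Real.log (Real.cosh y))
    (Set.Ici 0) := by
  apply strictMonoOn_of_deriv_pos (convex_Ici 0)
  · exact ((continuous_id.mul continuous_tanh).sub
      (Real.continuous_cosh.log fun x => (Real.cosh_pos x).ne')).continuousOn
  · intro x hx
    rw [interior_Ici] at hx
    rw [(F_hasDerivAt x).deriv]
    have hx' : (0:ℝ) < x := hx
    positivity

lemma F_pos {y : ℝ} (hy : 0 < y) : 0 < y * Real.tanh y - Real.log (Real.cosh y) := by
  have := F_mono (Set.self_mem_Ici) (Set.mem_Ici.2 hy.le) hy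
  simpa using this

lemma F_le_log2 {y : ℝ} (hy : 0 ≤ y) :
    y * Real.tanh y - Real.log (Real.cosh y) ≤ Real.log 2 := by
  have h1 : y * Real.tanh y ≤ y := by
    nlinarith [Real.tanh_lt_one y]
  have h2 : y - Real.log 2 ≤ Real.log (Real.cosh y) := by
    have hc : Real.exp y / 2 ≤ Real.cosh y := by
      rw [Real.cosh_eq]
      have := Real.exp_pos (-y)
      linarith
    calc y - Real.log 2 = Real.log (Real.exp y / 2) := by
          rw [Real.log_div (Real.exp_ne_zero y) (by norm_num), Real.log_exp]
      _ ≤ Real.log (Real.cosh y) :=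
          Real.log_le_log (by positivity) hc
  linarith

lemma phi128_gt_one : 1 < 2 * (1.28:ℝ) * Real.tanh 1.28 := by
  obtain ⟨hc1, hc2, hs1, hs2⟩ := cosh128_bounds
  rw [Real.tanh_eq_sinh_div_cosh, ← mul_div_assoc, lt_div_iff₀ (Real.cosh_pos _)]
  nlinarith

lemma exists_a : ∃ a ∈ Set.Ioo (0:ℝ) 1.28, 2 * a * Real.tanh a = 1 := by
  have hcont : ContinuousOn (fun y : ℝ => 2 * y * Real.tanh y) (Set.Icc 0 1.28) :=
    ((continuous_const.mul continuous_id).mul continuous_tanh).continuousOn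
  have h0 : (fun y : ℝ => 2 * y * Real.tanh y) 0 = 0 := by simp
  have hmem : (1:ℝ) ∈ Set.Ioo ((fun y : ℝ => 2 * y * Real.tanh y) 0)
      ((fun y : ℝ => 2 * y * Real.tanh y) 1.28) := by
    rw [h0]; exact ⟨one_pos, phi128_gt_one⟩
  obtain ⟨a, ha, hphi⟩ := intermediate_value_Ioo (by norm_num : (0:ℝ) ≤ 1.28) hcont hmem
  exact ⟨a, ha, hphi⟩

lemma HH_zero : HH 0 = 0 := by simp [HH]

lemma HH_anti {a : ℝ} (ha : a ∈ Set.Ioo (0:ℝ) 1.28) (hphi : 2 * a * Real.tanh a = 1) :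
    StrictAntiOn HH (Set.Icc 0 a) := by
  apply strictAntiOn_of_deriv_neg (convex_Icc 0 a) continuous_HH.continuousOn
  intro x hx
  rw [interior_Icc] at hx
  rw [(HH_hasDerivAt x).deriv]
  have hx0 : 0 < x := hx.1
  have hlt : 2 * x * Real.tanh x < 1 := by
    rw [← hphi]
    exact phi_mono (Set.mem_Ici.2 hx0.le) (Set.mem_Ici.2 (hx0.trans hx.2).le) hx.2
  have hpos : 0 < x * (1 / Real.cosh x) ^ 2 := by positivity
  nlinarith

lemma HH_mono {a : ℝ} (ha : a ∈ Set.Ioo (0:ℝ) 1.28) (hphi : 2 * a * Real.tanh a = 1) :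
    StrictMonoOn HH (Set.Ici a) := by
  apply strictMonoOn_of_deriv_pos (convex_Ici a) continuous_HH.continuousOn
  intro x hx
  rw [interior_Ici] at hx
  rw [(HH_hasDerivAt x).deriv]
  have hx0 : 0 < x := ha.1.trans hx
  have hlt : 1 < 2 * x * Real.tanh x := by
    rw [← hphi]
    exact phi_mono (Set.mem_Ici.2 ha.1.le) (Set.mem_Ici.2 hx0.le) hx
  have hpos : 0 < x * (1 / Real.cosh x) ^ 2 := by positivity
  nlinarith

lemma exists_c : ∃ c ∈ Set.Ioo (1.28:ℝ) 1.29, HH c = 0 := by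
  have hmem : (0:ℝ) ∈ Set.Ioo (HH 1.28) (HH 1.29) := ⟨HH128_neg, HH129_pos⟩
  obtain ⟨c, hc, hHc⟩ := intermediate_value_Ioo (by norm_num : (1.28:ℝ) ≤ 1.29)
    continuous_HH.continuousOn hmem
  exact ⟨c, hc, hHc⟩

lemma HH_neg_of_lt {a c : ℝ} (ha : a ∈ Set.Ioo (0:ℝ) 1.28) (hphi : 2 * a * Real.tanh a = 1)
    (hc : c ∈ Set.Ioo (1.28:ℝ) 1.29) (hHc : HH c = 0) :
    ∀ y : ℝ, 0 < y → y < c → HH y < 0 := by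
  intro y hy hyc
  rcases le_or_gt y a with h | h
  · have := HH_anti ha hphi (Set.mem_Icc.2 ⟨le_refl 0, ha.1.le⟩)
      (Set.mem_Icc.2 ⟨hy.le, h⟩) hy
    rwa [HH_zero] at this
  · have := HH_mono ha hphi (Set.mem_Ici.2 h.le) (Set.mem_Ici.2 (h.le.trans hyc.le)) hyc
    rwa [hHc] at this

lemma HH_pos_of_gt {a c : ℝ} (ha : a ∈ Set.Ioo (0:ℝ) 1.28) (hphi : 2 * a * Real.tanh a = 1)
    (hc : c ∈ Set.Ioo (1.28:ℝ) 1.29) (hHc : HH c = 0) :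
    ∀ y : ℝ, c < y → 0 < HH y := by
  intro y hyc
  have hac : a < c := ha.2.trans hc.1
  have := HH_mono ha hphi (Set.mem_Ici.2 hac.le) (Set.mem_Ici.2 (hac.le.trans hyc.le)) hyc
  rwa [hHc] at this


lemma g_hasDerivAt {y : ℝ} (hy : y ≠ 0) :
    HasDerivAt (fun y : ℝ => Real.log (Real.cosh y) / y - Real.tanh y)
      (Real.tanh y / y - Real.log (Real.cosh y) / y ^ 2 - (1 / Real.cosh y) ^ 2) y := by
  have h := ((logcosh_hasDerivAt y).fun_div (hasDerivAt_id y) hy).fun_sub (tanh_hasDerivAt y)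
  refine h.congr_deriv ?_
  simp only [id_eq]
  field_simp

lemma D_eq_HH_div {y : ℝ} (hy : y ≠ 0) :
    Real.tanh y / y - Real.log (Real.cosh y) / y ^ 2 - (1 / Real.cosh y) ^ 2
      = HH y / y ^ 2 := by
  simp only [HH]
  field_simp

/-- Properties of `g(y) = (ln cosh y)/y − tanh y` on `(0,∞)`: it is negative, strictly
decreasing on `(0,c)` and strictly increasing on `(c,∞)` where `c ≈ 1.28377` is the
unique positive critical point, and it tends to `0` at `0⁺` and at `∞`. -/
theorem g_properties :
    ∃ c : ℝ, c ∈ Set.Ioo (1.28 : ℝ) 1.29 ∧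
      (∀ y : ℝ, 0 < y →
        (Real.tanh y / y - Real.log (Real.cosh y) / y ^ 2 - (1 / Real.cosh y) ^ 2 = 0
          ↔ y = c)) ∧
      (∀ y : ℝ, 0 < y → Real.log (Real.cosh y) / y - Real.tanh y < 0) ∧
      StrictAntiOn (fun y : ℝ => Real.log (Real.cosh y) / y - Real.tanh y)
        (Set.Ioo 0 c) ∧
      StrictMonoOn (fun y : ℝ => Real.log (Real.cosh y) / y - Real.tanh y)
        (Set.Ioi c) ∧
      Tendsto (fun y : ℝ => Real.log (Real.cosh y) / y - Real.tanh y)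
        (nhdsWithin 0 (Set.Ioi 0)) (nhds 0) ∧
      Tendsto (fun y : ℝ => Real.log (Real.cosh y) / y - Real.tanh y)
        atTop (nhds 0) := by
  obtain ⟨a, ha, hphi⟩ := exists_a
  obtain ⟨c, hc, hHc⟩ := exists_c
  have hc0 : (0:ℝ) < c := lt_trans (by norm_num) hc.1
  refine ⟨c, hc, ?_, ?_, ?_, ?_, ?_, ?_⟩
  · -- critical point characterization
    intro y hy
    constructor
    · intro h
      rw [D_eq_HH_div hy.ne'] at h
      have hHH : HH y = 0 := by
        have hy2 : y ^ 2 ≠ 0 := pow_ne_zero 2 hy.ne'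
        field_simp at h
        simpa using h
      rcases lt_trichotomy y c with h1 | h1 | h1
      · exact absurd hHH (HH_neg_of_lt ha hphi hc hHc y hy h1).ne
      · exact h1
      · exact absurd hHH (HH_pos_of_gt ha hphi hc hHc y h1).ne'
    · rintro rfl
      rw [D_eq_HH_div hy.ne', hHc, zero_div]
  · -- negativity
    intro y hy
    have hF := F_pos hy
    rw [sub_neg, div_lt_iff₀ hy]
    nlinarith
  · -- strict anti on Ioo 0 c
    apply strictAntiOn_of_deriv_neg (convex_Ioo 0 c)
    · intro x hx
      exact ((g_hasDerivAt (ne_of_gt hx.1)).continuousAt).continuousWithinAt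
    · intro x hx
      rw [interior_Ioo] at hx
      rw [(g_hasDerivAt (ne_of_gt hx.1)).deriv, D_eq_HH_div (ne_of_gt hx.1)]
      exact div_neg_of_neg_of_pos (HH_neg_of_lt ha hphi hc hHc x hx.1 hx.2)
        (pow_pos hx.1 2)
  · -- strict mono on Ioi c
    apply strictMonoOn_of_deriv_pos (convex_Ioi c)
    · intro x hx
      have hx0 : 0 < x := hc0.trans hx
      exact ((g_hasDerivAt hx0.ne').continuousAt).continuousWithinAt
    · intro x hx
      rw [interior_Ioi] at hx
      have hx0 : 0 < x := hc0.trans hx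
      rw [(g_hasDerivAt hx0.ne').deriv, D_eq_HH_div hx0.ne']
      exact div_pos (HH_pos_of_gt ha hphi hc hHc x hx) (pow_pos hx0 2)
  · -- limit at 0⁺
    have hlow : Tendsto (fun y : ℝ => -Real.tanh y) (nhdsWithin 0 (Set.Ioi 0)) (nhds 0) := by
      have := (continuous_tanh.neg.tendsto 0).mono_left
        (nhdsWithin_le_nhds (s := Set.Ioi 0))
      simpa [Pi.neg_def] using this
    refine tendsto_of_tendsto_of_tendsto_of_le_of_le' hlow tendsto_const_nhds ?_ ?_
    · filter_upwards [self_mem_nhdsWithin] with y hy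
      have hy0 : (0:ℝ) < y := hy
      have h1 : 0 ≤ Real.log (Real.cosh y) := Real.log_nonneg (Real.one_le_cosh y)
      have : 0 ≤ Real.log (Real.cosh y) / y := div_nonneg h1 hy0.le
      linarith
    · filter_upwards [self_mem_nhdsWithin] with y hy
      have hy0 : (0:ℝ) < y := hy
      have hF := F_pos hy0
      rw [sub_nonpos, div_le_iff₀ hy0]
      nlinarith
  · -- limit at ∞
    have hlow : Tendsto (fun y : ℝ => -Real.log 2 / y) atTop (nhds 0) := by
      simpa using (tendsto_const_nhds (x := -Real.log 2)).div_atTop tendsto_id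
    refine tendsto_of_tendsto_of_tendsto_of_le_of_le' hlow tendsto_const_nhds ?_ ?_
    · filter_upwards [eventually_gt_atTop (0:ℝ)] with y hy0
      have hF := F_le_log2 hy0.le
      rw [div_le_iff₀ hy0, sub_mul, div_mul_cancel₀ _ hy0.ne']
      nlinarith
    · filter_upwards [eventually_gt_atTop (0:ℝ)] with y hy0
      have hF := F_pos hy0
      rw [sub_nonpos, div_le_iff₀ hy0]
      nlinarith
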